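/- In QHC, ⊢ ¬α ↔ !¬?α: intuitionistic negation is definable via classical negation, i.e., the problem ¬α is equivalent to the problem 'prove that α has no solution'. -/
import Mathlib


/- Problem (intuitionistic) formulas and proposition (classical) formulas of QHC. -/
mutual
inductive PF : Type
  | var : Nat → PF
  | bot : PF
  | and : PF → PF → PF
  | or : PF → PF → PF
  | imp : PF → PF → PF
  | bang : CF → PF
inductive CF : Type
  | var : Nat → CF
  | fls : CF
  | and : CF → CF → CF
  | or : CF → CF → CF
  | imp : CF → CF → CF
  | quest : PF → CF
end

def PF.neg (α : PF) : PF := α.imp PF.bot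
def CF.neg (p : CF) : CF := p.imp CF.fls
def PF.iff (α β : PF) : PF := (α.imp β).and (β.imp α)
def CF.iff (p q : CF) : CF := (p.imp q).and (q.imp p)
def CF.box (p : CF) : CF := CF.quest (PF.bang p)
def PF.nabla (α : PF) : PF := PF.bang (CF.quest α)

/- Derivability in QHC, parameterized by a set `Ax` of extra problem axioms
(used to treat the axiom ¬!0 and its variants uniformly). Intuitionistic logic
on problems, classical logic on propositions, the rules α ⊢ ?α and p ⊢ !p, and
the mixed axioms ?!p → p, α → !?α, !(p→q) → (!p → !q), ?(α→β) → (?α → ?β). -/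
mutual
inductive ProvP (Ax : PF → Prop) : PF → Prop
  | axm {α} : Ax α → ProvP Ax α
  | mp {α β} : ProvP Ax (α.imp β) → ProvP Ax α → ProvP Ax β
  | ak (α β : PF) : ProvP Ax (α.imp (β.imp α))
  | as (α β γ : PF) : ProvP Ax ((α.imp (β.imp γ)).imp ((α.imp β).imp (α.imp γ)))
  | andI (α β : PF) : ProvP Ax (α.imp (β.imp (α.and β)))
  | andE1 (α β : PF) : ProvP Ax ((α.and β).imp α)
  | andE2 (α β : PF) : ProvP Ax ((α.and β).imp β)
  | orI1 (α β : PF) : ProvP Ax (α.imp (α.or β))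
  | orI2 (α β : PF) : ProvP Ax (β.imp (α.or β))
  | orE (α β γ : PF) : ProvP Ax ((α.imp γ).imp ((β.imp γ).imp ((α.or β).imp γ)))
  | exf (α : PF) : ProvP Ax (PF.bot.imp α)
  | bangIntro {p} : ProvC Ax p → ProvP Ax (PF.bang p)
  | bangImp (p q : CF) : ProvP Ax ((PF.bang (p.imp q)).imp ((PF.bang p).imp (PF.bang q)))
  | bangQuest (α : PF) : ProvP Ax (α.imp (PF.bang (CF.quest α)))
inductive ProvC (Ax : PF → Prop) : CF → Prop
  | mp {p q} : ProvC Ax (p.imp q) → ProvC Ax p → ProvC Ax q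
  | ak (p q : CF) : ProvC Ax (p.imp (q.imp p))
  | as (p q r : CF) : ProvC Ax ((p.imp (q.imp r)).imp ((p.imp q).imp (p.imp r)))
  | andI (p q : CF) : ProvC Ax (p.imp (q.imp (p.and q)))
  | andE1 (p q : CF) : ProvC Ax ((p.and q).imp p)
  | andE2 (p q : CF) : ProvC Ax ((p.and q).imp q)
  | orI1 (p q : CF) : ProvC Ax (p.imp (p.or q))
  | orI2 (p q : CF) : ProvC Ax (q.imp (p.or q))
  | orE (p q r : CF) : ProvC Ax ((p.imp r).imp ((q.imp r).imp ((p.or q).imp r)))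
  | exf (p : CF) : ProvC Ax (CF.fls.imp p)
  | lem (p : CF) : ProvC Ax (p.or (p.imp CF.fls))
  | questIntro {α} : ProvP Ax α → ProvC Ax (CF.quest α)
  | questImp (α β : PF) : ProvC Ax ((CF.quest (α.imp β)).imp ((CF.quest α).imp (CF.quest β)))
  | questBang (p : CF) : ProvC Ax ((CF.quest (PF.bang p)).imp p)
end

/-- The axiom (!⊥): ¬!0. -/
def QHCAx : PF → Prop := fun α => α = (PF.bang CF.fls).imp PF.bot

/-- Derivability of a problem in QHC. -/
def PrvP (α : PF) : Prop := ProvP QHCAx α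
/-- Derivability of a proposition in QHC. -/
def PrvC (p : CF) : Prop := ProvC QHCAx p


namespace QHCAux
variable {Ax : PF → Prop}

theorem transP {a b c : PF} (h1 : ProvP Ax (a.imp b)) (h2 : ProvP Ax (b.imp c)) :
    ProvP Ax (a.imp c) :=
  ProvP.mp (ProvP.mp (ProvP.as a b c) (ProvP.mp (ProvP.ak (b.imp c) a) h2)) h1

theorem transC {a b c : CF} (h1 : ProvC Ax (a.imp b)) (h2 : ProvC Ax (b.imp c)) :
    ProvC Ax (a.imp c) :=
  ProvC.mp (ProvC.mp (ProvC.as a b c) (ProvC.mp (ProvC.ak (b.imp c) a) h2)) h1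

/-- from ⊢ Y→Z get ⊢ (X→Y)→(X→Z) -/
theorem liftC {X Y Z : CF} (h : ProvC Ax (Y.imp Z)) :
    ProvC Ax ((X.imp Y).imp (X.imp Z)) :=
  ProvC.mp (ProvC.as X Y Z) (ProvC.mp (ProvC.ak (Y.imp Z) X) h)

/-- from ⊢ A→(X→Y) and ⊢ Y→Z get ⊢ A→(X→Z) -/
theorem compLeftP {A X Y Z : PF} (h1 : ProvP Ax (A.imp (X.imp Y)))
    (h2 : ProvP Ax (Y.imp Z)) : ProvP Ax (A.imp (X.imp Z)) :=
  transP h1 (ProvP.mp (ProvP.as X Y Z) (ProvP.mp (ProvP.ak (Y.imp Z) X) h2))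

/-- from ⊢ B→X get ⊢ (X→c)→(B→c) -/
theorem precompP {B X c : PF} (h : ProvP Ax (B.imp X)) :
    ProvP Ax (((X.imp c)).imp (B.imp c)) :=
  ProvP.mp
    (ProvP.mp (ProvP.as (X.imp c) (B.imp X) (B.imp c))
      (transP (ProvP.ak (X.imp c) B) (ProvP.as B X c)))
    (ProvP.mp (ProvP.ak (B.imp X) (X.imp c)) h)

end QHCAux

theorem qhc_intuitionistic_negation (α : PF) :
    PrvP (PF.iff (PF.neg α) (PF.bang (CF.neg (CF.quest α)))) := by
  open QHCAux in
  have nq : PF := PF.bang ((CF.quest α).imp CF.fls)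
  -- direction 2: !¬?α → ¬α
  have bot_axm : ProvP QHCAx ((PF.bang CF.fls).imp PF.bot) := ProvP.axm rfl
  have d2 : ProvP QHCAx ((PF.bang ((CF.quest α).imp CF.fls)).imp (α.imp PF.bot)) := by
    have h1 := ProvP.bangImp (Ax := QHCAx) (CF.quest α) CF.fls
    have h2 := compLeftP h1 bot_axm
    exact transP h2 (precompP (ProvP.bangQuest α))
  -- direction 1: ¬α → !¬?α
  have d1 : ProvP QHCAx ((α.imp PF.bot).imp (PF.bang ((CF.quest α).imp CF.fls))) := by
    have s1 := ProvP.bangQuest (Ax := QHCAx) (α.imp PF.bot)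
    have c1 := ProvC.questImp (Ax := QHCAx) α PF.bot
    have s2 := ProvP.mp (ProvP.bangImp _ _) (ProvP.bangIntro c1)
    -- c2 : ?⊥ → fls
    have cexf : ProvC QHCAx ((CF.quest PF.bot).imp (CF.quest (PF.bang CF.fls))) :=
      ProvC.mp (ProvC.questImp _ _) (ProvC.questIntro (ProvP.exf (PF.bang CF.fls)))
    have c2 : ProvC QHCAx ((CF.quest PF.bot).imp CF.fls) :=
      transC cexf (ProvC.questBang CF.fls)
    have c3 : ProvC QHCAx (((CF.quest α).imp (CF.quest PF.bot)).imp
        ((CF.quest α).imp CF.fls)) := liftC c2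
    have s3 := ProvP.mp (ProvP.bangImp _ _) (ProvP.bangIntro c3)
    exact transP (transP s1 s2) s3
  exact ProvP.mp (ProvP.mp (ProvP.andI _ _) d1) d2
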